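/- arXiv:1506.02194 — 3 statements merged into one kernel-verified Lean document; each statement's English description precedes it below -/
import Mathlib

section
/- For all real numbers a, b with b ≤ a, one has (1/4)·h(a,b) ≤ (e^a − e^b)/((1+e^a)(1+e^b)) ≤ h(a,b), where h(a,b) := max(min(1,e^a) − min(1,e^b), min(1,e^{−b}) − min(1,e^{−a})). -/
theorem dobrushin_comparison_ineq (a b : ℝ) (hba : b ≤ a) :
    (1 / 4) * max (min 1 (Real.exp a) - min 1 (Real.exp b))
        (min 1 (Real.exp (-b)) - min 1 (Real.exp (-a)))
      ≤ (Real.exp a - Real.exp b) / ((1 + Real.exp a) * (1 + Real.exp b)) ∧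
    (Real.exp a - Real.exp b) / ((1 + Real.exp a) * (1 + Real.exp b))
      ≤ max (min 1 (Real.exp a) - min 1 (Real.exp b))
          (min 1 (Real.exp (-b)) - min 1 (Real.exp (-a))) := by
  have hA : 0 < Real.exp a := Real.exp_pos a
  have hB : 0 < Real.exp b := Real.exp_pos b
  have hBA : Real.exp b ≤ Real.exp a := Real.exp_le_exp.2 hba
  rw [Real.exp_neg, Real.exp_neg]
  set A := Real.exp a with hAdef
  set B := Real.exp b with hBdef
  have hD : 0 < (1 + A) * (1 + B) := by positivity
  have hiA : A * A⁻¹ = 1 := mul_inv_cancel₀ hA.ne'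
  have hiB : B * B⁻¹ = 1 := mul_inv_cancel₀ hB.ne'
  rcases le_total a 0 with ha | ha
  · -- both ≤ 0 : A ≤ 1, B ≤ 1
    have hA1 : A ≤ 1 := Real.exp_le_one_iff.2 ha
    have hB1 : B ≤ 1 := Real.exp_le_one_iff.2 (hba.trans ha)
    have h1A : 1 ≤ A⁻¹ := by rw [le_inv_comm₀ one_pos hA]; simpa using hA1
    have h1B : 1 ≤ B⁻¹ := by rw [le_inv_comm₀ one_pos hB]; simpa using hB1
    rw [min_eq_right hA1, min_eq_right hB1, min_eq_left h1A, min_eq_left h1B]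
    have hmax : max (A - B) (1 - 1) = A - B := by
      rw [max_eq_left]; linarith
    rw [hmax]
    have h4 : (1 + A) * (1 + B) ≤ 4 := by nlinarith
    have h1 : 1 ≤ (1 + A) * (1 + B) := by nlinarith
    constructor
    · rw [le_div_iff₀ hD]
      nlinarith [mul_nonneg (sub_nonneg.2 hBA) (sub_nonneg.2 h4)]
    · rw [div_le_iff₀ hD]
      nlinarith [mul_nonneg (sub_nonneg.2 hBA) (sub_nonneg.2 h1)]
  rcases le_total 0 b with hb | hb
  · -- both ≥ 0 : 1 ≤ B ≤ A
    have hA1 : 1 ≤ A := Real.one_le_exp_iff.2 (hb.trans hba)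
    have hB1 : 1 ≤ B := Real.one_le_exp_iff.2 hb
    have h1A : A⁻¹ ≤ 1 := by rw [inv_le_one_iff₀]; right; exact hA1
    have h1B : B⁻¹ ≤ 1 := by rw [inv_le_one_iff₀]; right; exact hB1
    rw [min_eq_left hA1, min_eq_left hB1, min_eq_right h1B, min_eq_right h1A]
    have hAB : 0 < A * B := by positivity
    have hinv : B⁻¹ - A⁻¹ = (A - B) / (A * B) := by
      rw [eq_div_iff hAB.ne']
      nlinarith [hiA, hiB]
    have hnn : (0:ℝ) ≤ (A - B) / (A * B) := by
      apply div_nonneg (by linarith) hAB.le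
    have hmax : max (1 - 1) (B⁻¹ - A⁻¹) = (A - B) / (A * B) := by
      rw [hinv, max_eq_right (by linarith)]
    rw [hmax]
    constructor
    · have hre : (1:ℝ)/4 * ((A - B)/(A*B)) = (A - B)/(4*(A*B)) := by ring
      rw [hre, div_le_div_iff₀ (by positivity) hD]
      nlinarith [mul_nonneg (sub_nonneg.2 hBA) (mul_nonneg (sub_nonneg.2 hA1) hB.le),
        mul_nonneg (sub_nonneg.2 hBA) (sub_nonneg.2 hB1),
        mul_nonneg (mul_nonneg (sub_nonneg.2 hBA) (sub_nonneg.2 hA1)) (sub_nonneg.2 hB1)]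
    · rw [div_le_div_iff₀ hD hAB]
      nlinarith [mul_nonneg (sub_nonneg.2 hBA) (sub_nonneg.2 hA1),
        mul_nonneg (sub_nonneg.2 hBA) (sub_nonneg.2 hB1)]
  · -- b ≤ 0 ≤ a
    have hA1 : 1 ≤ A := Real.one_le_exp_iff.2 ha
    have hB1 : B ≤ 1 := Real.exp_le_one_iff.2 hb
    have h1A : A⁻¹ ≤ 1 := by rw [inv_le_one_iff₀]; right; exact hA1
    have h1B : 1 ≤ B⁻¹ := by rw [le_inv_comm₀ one_pos hB]; simpa using hB1
    rw [min_eq_left hA1, min_eq_right hB1, min_eq_left h1B, min_eq_right h1A]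
    -- key polynomial facts
    have key1 : (1 - B) * ((1 + A) * (1 + B)) ≤ 4 * (A - B) := by
      nlinarith [sq_nonneg (1 - B), mul_nonneg (sub_nonneg.2 hA1) (sq_nonneg (1 - B))]
    have hAinv : A * (1 - A⁻¹) = A - 1 := by rw [mul_sub, hiA, mul_one]
    have key2 : (1 - A⁻¹) * ((1 + A) * (1 + B)) ≤ 4 * (A - B) := by
      have h2 : (A - 1) * ((1 + A) * (1 + B)) ≤ A * (4 * (A - B)) := by
        nlinarith [sq_nonneg (A - 1), mul_nonneg (sub_nonneg.2 hB1) (sq_nonneg (A - 1))]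
      rw [← mul_le_mul_iff_right₀ hA, ← mul_assoc, hAinv]
      exact h2
    constructor
    · rw [le_div_iff₀ hD]
      rcases max_cases (1 - B) (1 - A⁻¹) with ⟨h, _⟩ | ⟨h, _⟩ <;> rw [h] <;> linarith
    · rw [div_le_iff₀ hD]
      rcases le_total (A * B) 1 with hab | hab
      · calc A - B ≤ (1 - B) * ((1 + A) * (1 + B)) := by nlinarith
          _ ≤ max (1 - B) (1 - A⁻¹) * ((1 + A) * (1 + B)) := by
              apply mul_le_mul_of_nonneg_right (le_max_left _ _) hD.le
      · calc A - B ≤ (1 - A⁻¹) * ((1 + A) * (1 + B)) := by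
              have hstep : A * (A - B) ≤ (A - 1) * ((1 + A) * (1 + B)) := by
                nlinarith [mul_nonneg (sub_nonneg.2 hab) (by positivity : (0:ℝ) ≤ A + 1)]
              rw [← mul_le_mul_iff_right₀ hA, ← mul_assoc, hAinv]
              exact hstep
          _ ≤ max (1 - B) (1 - A⁻¹) * ((1 + A) * (1 + B)) := by
              apply mul_le_mul_of_nonneg_right (le_max_right _ _) hD.le
end

section
/- Second derivative of log-determinant: with L positive definite and f(S) := log det(L_S) as above, for distinct i, j ∉ S, Δ_jΔ_i f(S) = log(1 − ρ(i,j|S)²), where ρ(i,j|S) := (L_{ij} − L_{i,S}L_S^{−1}L_{S,j}) / √((L_{ii} − L_{i,S}L_S^{−1}L_{S,i})·(L_{jj} − L_{j,S}L_S^{−1}L_{S,j})). In particular Δ_jΔ_i f(S) ≤ 0, so f is submodular. -/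
open Matrix


open Matrix

/-- Schur complement `L_{ii} - L_{i,S} L_S⁻¹ L_{S,i}` (conditional variance). -/
noncomputable def schurCompl (n : ℕ) (L : Matrix (Fin n) (Fin n) ℝ)
    (i : Fin n) (S : Finset (Fin n)) : ℝ :=
  L i i - (fun j : S => L i (j : Fin n)) ⬝ᵥ
    ((L.submatrix (fun x : S => (x : Fin n)) (fun x : S => (x : Fin n)))⁻¹ *ᵥ
      fun j : S => L (j : Fin n) i)

/-- Conditional covariance `L_{ij} - L_{i,S} L_S⁻¹ L_{S,j}`. -/
noncomputable def condCov (n : ℕ) (L : Matrix (Fin n) (Fin n) ℝ)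
    (i j : Fin n) (S : Finset (Fin n)) : ℝ :=
  L i j - (fun k : S => L i (k : Fin n)) ⬝ᵥ
    ((L.submatrix (fun x : S => (x : Fin n)) (fun x : S => (x : Fin n)))⁻¹ *ᵥ
      fun k : S => L (k : Fin n) j)

/-- Conditional correlation coefficient `ρ(i,j|S)`. -/
noncomputable def condCorr (n : ℕ) (L : Matrix (Fin n) (Fin n) ℝ)
    (i j : Fin n) (S : Finset (Fin n)) : ℝ :=
  condCov n L i j S / Real.sqrt (schurCompl n L i S * schurCompl n L j S)



variable {n : ℕ}


lemma posDef_submatrix_inj {m : Type*} [Fintype m] [DecidableEq m]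
    {L : Matrix (Fin n) (Fin n) ℝ} (hL : L.PosDef) (f : m → Fin n)
    (hf : Function.Injective f) : (L.submatrix f f).PosDef := by
  rw [posDef_iff_dotProduct_mulVec]
  constructor
  · have h := hL.1
    unfold Matrix.IsHermitian at *
    rw [conjTranspose_submatrix, h]
  · intro x hx
    set y : Fin n → ℝ := fun k => ∑ a : m, if f a = k then x a else 0 with hy
    have key : ∀ g : Fin n → ℝ, ∑ k, y k * g k = ∑ a, x a * g (f a) := by
      intro g
      simp only [hy, Finset.sum_mul, ite_mul, zero_mul]
      rw [Finset.sum_comm]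
      simp [Finset.sum_ite_eq]
    have hyx : ∀ a : m, y (f a) = x a := by
      intro a
      simp only [hy]
      rw [Finset.sum_eq_single a]
      · simp
      · intro b _ hb; rw [if_neg (fun heq => hb (hf heq))]
      · simp
    have hy0 : y ≠ 0 := by
      intro h
      apply hx
      funext a
      have := congrFun h (f a)
      rw [hyx a] at this
      exact this
    have hq : dotProduct (star x) ((L.submatrix f f) *ᵥ x) = dotProduct (star y) (L *ᵥ y) := by
      have h1 : dotProduct (star y) (L *ᵥ y) = ∑ k, y k * (L *ᵥ y) k := by
        simp [dotProduct]
      rw [h1, key]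
      have h2 : ∀ a : m, (L *ᵥ y) (f a) = ∑ b, x b * L (f a) (f b) := by
        intro a
        have : (L *ᵥ y) (f a) = ∑ l, y l * L (f a) l := by
          simp [mulVec, dotProduct, mul_comm]
        rw [this, key]
      simp only [h2]
      simp [dotProduct, mulVec, submatrix_apply, Finset.mul_sum]
      congr 1; funext a; congr 1; funext b; ring
    rw [hq]
    exact hL.dotProduct_mulVec_pos hy0

lemma submatrix_sum_elim (L : Matrix (Fin n) (Fin n) ℝ) (S : Finset (Fin n))
    {γ : Type} (g : γ → Fin n) :
    L.submatrix (Sum.elim (fun x : S => (x : Fin n)) g) (Sum.elim (fun x : S => (x : Fin n)) g) =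
      fromBlocks (L.submatrix (fun x : S => (x : Fin n)) (fun x : S => (x : Fin n)))
        (L.submatrix (fun x : S => (x : Fin n)) g)
        (L.submatrix g (fun x : S => (x : Fin n)))
        (L.submatrix g g) := by
  ext a b
  cases a <;> cases b <;> rfl

lemma entry_lemma (L : Matrix (Fin n) (Fin n) ℝ) (S : Finset (Fin n))
    {γ : Type} (g : γ → Fin n) (a b : γ) :
    (L.submatrix g g - L.submatrix g (fun x : S => (x : Fin n)) *
      (L.submatrix (fun x : S => (x : Fin n)) (fun x : S => (x : Fin n)))⁻¹ *
      L.submatrix (fun x : S => (x : Fin n)) g) a b = condCov n L (g a) (g b) S := by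
  simp only [condCov, Matrix.sub_apply, Matrix.mul_apply, submatrix_apply, dotProduct,
    Matrix.mulVec, Finset.mul_sum, Finset.sum_mul]
  congr 1
  rw [Finset.sum_comm]
  congr 1; funext k; congr 1; funext l; ring

lemma aux_det (L : Matrix (Fin n) (Fin n) ℝ) (T : Finset (Fin n)) {α : Type} [Fintype α]
    [DecidableEq α] (f : α → Fin n) (hf : Function.Injective f)
    (hmem : ∀ a, f a ∈ T) (hcard : Fintype.card α = T.card) :
    (L.submatrix (fun x : T => (x : Fin n)) (fun x : T => (x : Fin n))).det =
      (L.submatrix f f).det := by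
  have hgb : Function.Bijective (fun a : α => (⟨f a, hmem a⟩ : T)) := by
    rw [Fintype.bijective_iff_injective_and_card]
    refine ⟨fun a b h => hf (congrArg Subtype.val h), by simp [hcard, Fintype.card_coe]⟩
  let e := Equiv.ofBijective _ hgb
  rw [← Matrix.det_submatrix_equiv_self e]
  rfl

lemma detA (L : Matrix (Fin n) (Fin n) ℝ) (hL : L.PosDef) (S : Finset (Fin n))
    (i : Fin n) (hi : i ∉ S) :
    (L.submatrix (fun x : (insert i S : Finset (Fin n)) => (x : Fin n))
      (fun x : (insert i S : Finset (Fin n)) => (x : Fin n))).det =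
    (L.submatrix (fun x : S => (x : Fin n)) (fun x : S => (x : Fin n))).det *
      condCov n L i i S := by
  set f : (S : Type) ⊕ Unit → Fin n := Sum.elim (fun x : S => (x : Fin n)) (fun _ => i) with hfdef
  have hf : Function.Injective f := by
    rintro (a | a) (b | b) h <;>
      simp only [hfdef, Sum.elim_inl, Sum.elim_inr] at h
    · exact congrArg Sum.inl (Subtype.coe_injective h)
    · exact absurd (h ▸ a.2) hi
    · exact absurd (h ▸ b.2 : i ∈ S) hi
    · simp
  have hmem : ∀ a, f a ∈ insert i S := by
    rintro (a | a)
    · exact Finset.mem_insert_of_mem a.2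
    · exact Finset.mem_insert_self i S
  have hcard : Fintype.card ((S : Type) ⊕ Unit) = (insert i S).card := by
    simp [Finset.card_insert_of_notMem hi]
  rw [aux_det L _ f hf hmem hcard, hfdef, submatrix_sum_elim]
  have hA : (L.submatrix (fun x : S => (x : Fin n)) (fun x : S => (x : Fin n))).PosDef :=
    posDef_submatrix_inj hL _ Subtype.coe_injective
  haveI : Invertible (L.submatrix (fun x : S => (x : Fin n)) (fun x : S => (x : Fin n))) :=
    (L.submatrix _ _).invertibleOfIsUnitDet (isUnit_iff_ne_zero.mpr hA.det_pos.ne')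
  rw [Matrix.det_fromBlocks₁₁, Matrix.invOf_eq_nonsing_inv]
  congr 1
  rw [Matrix.det_unique]
  exact entry_lemma L S _ _ _

lemma detB (L : Matrix (Fin n) (Fin n) ℝ) (hL : L.PosDef) (S : Finset (Fin n))
    (i j : Fin n) (hij : i ≠ j) (hi : i ∉ S) (hj : j ∉ S) :
    (L.submatrix (fun x : (insert i (insert j S) : Finset (Fin n)) => (x : Fin n))
      (fun x : (insert i (insert j S) : Finset (Fin n)) => (x : Fin n))).det =
    (L.submatrix (fun x : S => (x : Fin n)) (fun x : S => (x : Fin n))).det *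
      (condCov n L i i S * condCov n L j j S - condCov n L i j S * condCov n L j i S) := by
  set f : (S : Type) ⊕ Fin 2 → Fin n := Sum.elim (fun x : S => (x : Fin n)) ![i, j] with hfdef
  have hf : Function.Injective f := by
    have hv : ∀ k : Fin 2, (![i, j] : Fin 2 → Fin n) k ∉ S := by
      intro k; fin_cases k <;> simpa
    rintro (a | a) (b | b) h <;>
      simp only [hfdef, Sum.elim_inl, Sum.elim_inr] at h
    · exact congrArg Sum.inl (Subtype.coe_injective h)
    · exact absurd (h ▸ a.2) (hv b)
    · exact absurd (h ▸ b.2) (hv a)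
    · congr 1
      fin_cases a <;> fin_cases b <;> simp_all <;>
        first | rfl | exact absurd h hij | exact absurd h.symm hij
  have hmem : ∀ a, f a ∈ insert i (insert j S) := by
    rintro (a | a)
    · exact Finset.mem_insert_of_mem (Finset.mem_insert_of_mem a.2)
    · fin_cases a
      · exact Finset.mem_insert_self i _
      · exact Finset.mem_insert_of_mem (Finset.mem_insert_self j S)
  have hij' : i ∉ insert j S := by
    simp [Finset.mem_insert, hij, hi]
  have hcard : Fintype.card ((S : Type) ⊕ Fin 2) = (insert i (insert j S)).card := by
    rw [Finset.card_insert_of_notMem hij', Finset.card_insert_of_notMem hj]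
    simp
  rw [aux_det L _ f hf hmem hcard, hfdef, submatrix_sum_elim]
  have hA : (L.submatrix (fun x : S => (x : Fin n)) (fun x : S => (x : Fin n))).PosDef :=
    posDef_submatrix_inj hL _ Subtype.coe_injective
  haveI : Invertible (L.submatrix (fun x : S => (x : Fin n)) (fun x : S => (x : Fin n))) :=
    (L.submatrix _ _).invertibleOfIsUnitDet (isUnit_iff_ne_zero.mpr hA.det_pos.ne')
  rw [Matrix.det_fromBlocks₁₁, Matrix.invOf_eq_nonsing_inv]
  congr 1
  rw [Matrix.det_fin_two]
  rw [entry_lemma, entry_lemma, entry_lemma, entry_lemma]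
  simp

lemma condCov_symm (L : Matrix (Fin n) (Fin n) ℝ) (hLsym : L.IsSymm)
    (i j : Fin n) (S : Finset (Fin n)) :
    condCov n L i j S = condCov n L j i S := by
  have hsym : ∀ a b : Fin n, L a b = L b a := fun a b => hLsym.apply b a
  have hAsym : ((L.submatrix (fun x : S => (x : Fin n)) (fun x : S => (x : Fin n)))⁻¹)ᵀ =
      (L.submatrix (fun x : S => (x : Fin n)) (fun x : S => (x : Fin n)))⁻¹ := by
    rw [Matrix.transpose_nonsing_inv]
    congr 1
    rw [Matrix.transpose_submatrix, hLsym]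
  have hAinv : ∀ k l : S, (L.submatrix (fun x : S => (x : Fin n)) (fun x : S => (x : Fin n)))⁻¹ k l
      = (L.submatrix (fun x : S => (x : Fin n)) (fun x : S => (x : Fin n)))⁻¹ l k := by
    intro k l
    conv_lhs => rw [← hAsym]
    rfl
  unfold condCov
  simp only [dotProduct, Matrix.mulVec, Finset.mul_sum]
  rw [hsym i j]
  congr 1
  rw [Finset.sum_comm]
  congr 1; funext k; congr 1; funext l
  rw [hsym i (l : Fin n), hsym ((k : Fin n)) j, hAinv l k]
  ring

theorem logdet_second_derivative (n : ℕ) (L : Matrix (Fin n) (Fin n) ℝ)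
    (hL : L.PosDef) (hLsym : L.IsSymm)
    (f : Finset (Fin n) → ℝ)
    (hf : ∀ S : Finset (Fin n),
      f S = Real.log ((L.submatrix (fun x : S => (x : Fin n)) (fun x : S => (x : Fin n))).det))
    (i j : Fin n) (hij : i ≠ j) (S : Finset (Fin n)) (hi : i ∉ S) (hj : j ∉ S) :
    (f (insert i (insert j S)) - f (insert j S)) - (f (insert i S) - f S) =
      Real.log (1 - (condCorr n L i j S) ^ 2) ∧
    (f (insert i (insert j S)) - f (insert j S)) - (f (insert i S) - f S) ≤ 0 := by
  set p := condCov n L i i S with hp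
  set q := condCov n L j j S with hq
  set cov := condCov n L i j S with hcov
  have hdetpos : ∀ T : Finset (Fin n),
      0 < (L.submatrix (fun x : T => (x : Fin n)) (fun x : T => (x : Fin n))).det :=
    fun T => (posDef_submatrix_inj hL _ Subtype.coe_injective).det_pos
  have ha := hdetpos S
  have hb := hdetpos (insert i S)
  have hc := hdetpos (insert j S)
  have hd := hdetpos (insert i (insert j S))
  have hbd := detA L hL S i hi
  have hcd := detA L hL S j hj
  have hdd := detB L hL S i j hij hi hj
  rw [condCov_symm L hLsym j i S, ← hcov] at hdd
  -- positivity of Schur complements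
  have hp0 : 0 < p := by
    rw [hbd] at hb; nlinarith
  have hq0 : 0 < q := by
    rw [hcd] at hc; nlinarith
  rw [show cov * cov = cov ^ 2 by ring] at hdd
  have hr0 : 0 < p * q - cov ^ 2 := by
    rw [hdd] at hd; nlinarith
  have hpq : 0 < p * q := mul_pos hp0 hq0
  have hrho : (condCorr n L i j S) ^ 2 = cov ^ 2 / (p * q) := by
    unfold condCorr
    have hs1 : schurCompl n L i S = p := rfl
    have hs2 : schurCompl n L j S = q := rfl
    rw [hs1, hs2, div_pow, Real.sq_sqrt hpq.le, ← hcov]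
  have h1 : 1 - (condCorr n L i j S) ^ 2 = (p * q - cov ^ 2) / (p * q) := by
    rw [hrho]
    field_simp
  have hmain : (f (insert i (insert j S)) - f (insert j S)) - (f (insert i S) - f S) =
      Real.log (1 - (condCorr n L i j S) ^ 2) := by
    rw [hf (insert i (insert j S)), hf (insert j S), hf (insert i S), hf S, hdd, hcd, hbd, h1]
    rw [Real.log_mul ha.ne' hr0.ne', Real.log_mul ha.ne' hq0.ne', Real.log_mul ha.ne' hp0.ne',
      Real.log_div hr0.ne' hpq.ne', Real.log_mul hp0.ne' hq0.ne']
    ring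
  refine ⟨hmain, ?_⟩
  rw [hmain, h1]
  refine Real.log_nonpos (div_nonneg hr0.le hpq.le) ?_
  rw [div_le_one hpq]
  nlinarith [sq_nonneg cov]
end

section
/- One-step contraction via Wasserstein matrix: let 𝕊 = {0,1}^V with V finite, T^{[i]}(x,z) := K^{[i]}(x,z^i)·[z^{V∖{i}} = x^{V∖{i}}], and define oscillations δ_j(h) := max_x |h(x^{V∖{j}}0^j) − h(x^{V∖{j}}1^j)| and Dobrushin coefficients C_{ij} := max_x |K^{[i]}_{x^{V∖{j}}0^j}({0}) − K^{[i]}_{x^{V∖{j}}1^j}({0})|. Then for every function h : 𝕊 → ℝ and every j ∈ V: δ_j(T^{[i]} h) ≤ δ_i(h)·C_{ij} + δ_j(h)·[i ≠ j]. -/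
open Finset

theorem wasserstein_one_step_contraction {V : Type*} [Fintype V] [DecidableEq V]
    (K : V → (V → Bool) → Bool → ℝ)
    (hKnonneg : ∀ i x b, 0 ≤ K i x b)
    (hKprob : ∀ i x, ∑ b : Bool, K i x b = 1)
    (T : V → ((V → Bool) → ℝ) → ((V → Bool) → ℝ))
    (hT : ∀ i h x, T i h x = ∑ b : Bool, K i x b * h (Function.update x i b))
    (δ : V → ((V → Bool) → ℝ) → ℝ)
    (hδ : ∀ j h, δ j h = Finset.univ.sup' Finset.univ_nonempty
      (fun x : V → Bool =>
        |h (Function.update x j false) - h (Function.update x j true)|))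
    (C : V → V → ℝ)
    (hC : ∀ i j, C i j = Finset.univ.sup' Finset.univ_nonempty
      (fun x : V → Bool =>
        |K i (Function.update x j false) false - K i (Function.update x j true) false|))
    (i j : V) (h : (V → Bool) → ℝ) :
    δ j (T i h) ≤ δ i h * C i j + δ j h * (if i = j then 0 else 1) := by
  have hδb : ∀ (g : (V → Bool) → ℝ) (k : V) (x : V → Bool),
      |g (Function.update x k false) - g (Function.update x k true)| ≤ δ k g := by
    intro g k x
    rw [hδ]
    exact Finset.le_sup' (fun x : V → Bool =>
      |g (Function.update x k false) - g (Function.update x k true)|) (Finset.mem_univ x)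
  have hCb : ∀ (i j : V) (x : V → Bool),
      |K i (Function.update x j false) false - K i (Function.update x j true) false| ≤ C i j := by
    intro i j x
    rw [hC]
    exact Finset.le_sup' (fun x : V → Bool =>
      |K i (Function.update x j false) false - K i (Function.update x j true) false|) (Finset.mem_univ x)
  have hδnn : ∀ k g, 0 ≤ δ k g := fun k g =>
    le_trans (abs_nonneg _) (hδb g k (fun _ => false))
  have hCnn : ∀ i j, 0 ≤ C i j := fun i j =>
    le_trans (abs_nonneg _) (hCb i j (fun _ => false))
  rw [hδ]
  apply Finset.sup'_le
  intro x _
  set y0 := Function.update x j false with hy0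
  set y1 := Function.update x j true with hy1
  have hk0 : K i y0 true = 1 - K i y0 false := by
    have := hKprob i y0; rw [Fintype.sum_bool] at this; linarith
  have hk1 : K i y1 true = 1 - K i y1 false := by
    have := hKprob i y1; rw [Fintype.sum_bool] at this; linarith
  rw [hT, hT, Fintype.sum_bool, Fintype.sum_bool, hk0, hk1]
  by_cases hij : i = j
  · subst hij
    simp only [if_pos rfl, if_true, mul_zero, add_zero]
    have e1 : Function.update y0 i true = y1 := by
      rw [hy0, hy1, Function.update_idem]
    have e2 : Function.update y0 i false = y0 := by
      rw [hy0, Function.update_idem]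
    have e3 : Function.update y1 i true = y1 := by
      rw [hy1, Function.update_idem]
    have e4 : Function.update y1 i false = y0 := by
      rw [hy0, hy1, Function.update_idem]
    rw [e1, e2, e3, e4]
    have key : (1 - K i y0 false) * h y1 + K i y0 false * h y0 -
        ((1 - K i y1 false) * h y1 + K i y1 false * h y0)
        = (h y0 - h y1) * (K i y0 false - K i y1 false) := by ring
    rw [key, abs_mul]
    exact mul_le_mul (hδb h i x) (hCb i i x) (abs_nonneg _) (hδnn i h)
  · simp only [if_neg hij, mul_one]
    set a0 := K i y0 false with ha0
    set b0 := K i y1 false with hb0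
    set u0 := h (Function.update y0 i true)
    set u1 := h (Function.update y1 i true)
    set v0 := h (Function.update y0 i false)
    set v1 := h (Function.update y1 i false)
    have hX : |u0 - u1| ≤ δ j h := by
      show |h (Function.update y0 i true) - h (Function.update y1 i true)| ≤ δ j h
      rw [hy0, hy1, Function.update_comm (Ne.symm hij), Function.update_comm (Ne.symm hij)]
      exact hδb h j _
    have hY : |v0 - v1| ≤ δ j h := by
      show |h (Function.update y0 i false) - h (Function.update y1 i false)| ≤ δ j h
      rw [hy0, hy1, Function.update_comm (Ne.symm hij), Function.update_comm (Ne.symm hij)]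
      exact hδb h j _
    have hZ : |v1 - u1| ≤ δ i h := hδb h i y1
    have hab : |a0 - b0| ≤ C i j := hCb i j x
    have ha0nn : 0 ≤ a0 := hKnonneg i y0 false
    have ha0le : a0 ≤ 1 := by
      have := hKprob i y0; rw [Fintype.sum_bool] at this
      have := hKnonneg i y0 true; linarith
    have key : (1 - a0) * u0 + a0 * v0 - ((1 - b0) * u1 + b0 * v1)
        = ((1 - a0) * (u0 - u1) + a0 * (v0 - v1)) + (v1 - u1) * (a0 - b0) := by ring
    calc |(1 - a0) * u0 + a0 * v0 - ((1 - b0) * u1 + b0 * v1)|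
        = |((1 - a0) * (u0 - u1) + a0 * (v0 - v1)) + (v1 - u1) * (a0 - b0)| := by rw [key]
      _ ≤ |(1 - a0) * (u0 - u1) + a0 * (v0 - v1)| + |(v1 - u1) * (a0 - b0)| := abs_add_le _ _
      _ ≤ (|(1 - a0) * (u0 - u1)| + |a0 * (v0 - v1)|) + |(v1 - u1) * (a0 - b0)| := by
          exact add_le_add (abs_add_le _ _) le_rfl
      _ = ((1 - a0) * |u0 - u1| + a0 * |v0 - v1|) + |v1 - u1| * |a0 - b0| := by
          rw [abs_mul, abs_mul, abs_mul, abs_of_nonneg ha0nn,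
            abs_of_nonneg (by linarith : (0:ℝ) ≤ 1 - a0)]
      _ ≤ ((1 - a0) * δ j h + a0 * δ j h) + δ i h * C i j := by
          exact add_le_add (add_le_add
            (mul_le_mul_of_nonneg_left hX (by linarith))
            (mul_le_mul_of_nonneg_left hY ha0nn))
            (mul_le_mul hZ hab (abs_nonneg _) (hδnn i h))
      _ = δ i h * C i j + δ j h := by ring
end
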